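/- Let T, N be positive reals with k = 3T/N + 1 a positive integer. If μ ≤ N · (1/N)^{k−1} · T^k / k!, then μ ≤ N² · ((e/3)³)^{T/N}. Consequently, for any β ∈ ((e/3)³, 1) and N sufficiently large (depending on β and a polynomial bound T ≤ N^m), μ ≤ β^{T/N} provided T ≥ α'·N·(log N)² for a suitable constant α'. -/

import Mathlib

open Real


lemma fact_lb (k : ℕ) : (k : ℝ) ^ k ≤ Real.exp 1 ^ k * (Nat.factorial k) := by
  have h := Real.sum_le_exp_of_nonneg (x := (k : ℝ)) (Nat.cast_nonneg k) (k + 1)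
  have hterm : (k : ℝ) ^ k / (Nat.factorial k) ≤
      ∑ i ∈ Finset.range (k + 1), (k : ℝ) ^ i / (Nat.factorial i) := by
    refine Finset.single_le_sum (f := fun i => (k : ℝ) ^ i / (Nat.factorial i)) ?_ ?_
    · intro i _; positivity
    · exact Finset.self_mem_range_succ k
  have h2 : (k : ℝ) ^ k / (Nat.factorial k) ≤ Real.exp k := hterm.trans h
  have hf : (0 : ℝ) < (Nat.factorial k : ℝ) := by positivity
  rw [exp_one_pow]
  calc (k : ℝ) ^ k = ((k : ℝ) ^ k / (Nat.factorial k)) * (Nat.factorial k) := by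
        field_simp
    _ ≤ Real.exp k * (Nat.factorial k) := by
        exact mul_le_mul_of_nonneg_right h2 hf.le

lemma part1 (N T μ : ℝ) (hN : 0 < N) (hT : 0 < T) (k : ℕ)
    (hk : (k : ℝ) = 3 * T / N + 1) (hμ0 : 0 ≤ μ)
    (hμ : μ ≤ N * (1 / N) ^ (k - 1) * T ^ k / (Nat.factorial k)) :
    μ ≤ N ^ 2 * ((Real.exp 1 / 3) ^ 3) ^ (T / N) := by
  have h3TN : (0:ℝ) < 3 * T / N := by positivity
  have hkR : (1:ℝ) < (k : ℝ) := by rw [hk]; linarith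
  have hkpos : 0 < k := by exact_mod_cast lt_trans zero_lt_one hkR
  have hkRpos : (0:ℝ) < (k : ℝ) := by exact_mod_cast hkpos
  have hfpos : (0:ℝ) < (Nat.factorial k : ℝ) := by positivity
  have he : (0:ℝ) < Real.exp 1 := Real.exp_pos 1
  -- factorial lower bound
  have hfb : (k:ℝ) ^ k / Real.exp 1 ^ k ≤ (Nat.factorial k) := by
    rw [div_le_iff₀ (by positivity)]
    calc (k:ℝ)^k ≤ Real.exp 1 ^ k * (Nat.factorial k) := fact_lb k
      _ = (Nat.factorial k) * Real.exp 1 ^ k := by ring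
  -- step 1
  have step1 : N * (1 / N) ^ (k - 1) * T ^ k / (Nat.factorial k)
      ≤ N * (1 / N) ^ (k - 1) * (Real.exp 1 * T / k) ^ k := by
    have hnum : (0:ℝ) ≤ N * (1 / N) ^ (k - 1) * T ^ k := by positivity
    have h1 : N * (1 / N) ^ (k - 1) * T ^ k / (Nat.factorial k)
        ≤ N * (1 / N) ^ (k - 1) * T ^ k / ((k:ℝ) ^ k / Real.exp 1 ^ k) :=
      div_le_div_of_nonneg_left hnum (by positivity) hfb
    refine h1.trans_eq ?_
    field_simp
    rw [div_pow, mul_comm ((k:ℝ) ^ k), div_mul_cancel₀ _ (pow_ne_zero k hkRpos.ne')]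
    ring
  -- step 2 : e*T/k ≤ e*N/3
  have hk3 : 3 * T / N ≤ (k:ℝ) := by rw [hk]; linarith
  have step2 : Real.exp 1 * T / (k:ℝ) ≤ Real.exp 1 * N / 3 := by
    rw [div_le_div_iff₀ hkRpos (by norm_num)]
    have : 3 * T ≤ N * (k:ℝ) := by
      have := (div_le_iff₀ hN).mp hk3
      linarith [this]
    calc Real.exp 1 * T * 3 = Real.exp 1 * (3 * T) := by ring
      _ ≤ Real.exp 1 * (N * (k:ℝ)) := by
          exact mul_le_mul_of_nonneg_left this he.le
      _ = Real.exp 1 * N * (k:ℝ) := by ring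
  have step2' : N * (1 / N) ^ (k - 1) * (Real.exp 1 * T / k) ^ k
      ≤ N * (1 / N) ^ (k - 1) * (Real.exp 1 * N / 3) ^ k := by
    refine mul_le_mul_of_nonneg_left ?_ (by positivity)
    exact pow_le_pow_left₀ (by positivity) step2 k
  -- step 3 : algebra
  have step3 : N * (1 / N) ^ (k - 1) * (Real.exp 1 * N / 3) ^ k
      = N ^ 2 * (Real.exp 1 / 3) ^ k := by
    have hkk : k - 1 + 1 = k := Nat.succ_pred_eq_of_pos hkpos
    have hNk : (1 / N) ^ (k - 1) * N ^ k = N := by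
      calc (1 / N) ^ (k - 1) * N ^ k = (1 / N) ^ (k-1) * (N ^ (k-1) * N) := by
            rw [← pow_succ, hkk]
        _ = ((1/N) * N) ^ (k-1) * N := by rw [mul_pow]; ring
        _ = N := by rw [one_div, inv_mul_cancel₀ hN.ne', one_pow, one_mul]
    have : (Real.exp 1 * N / 3) ^ k = (Real.exp 1 / 3) ^ k * N ^ k := by
      rw [← mul_pow]; congr 1; ring
    rw [this]
    calc N * (1 / N) ^ (k - 1) * ((Real.exp 1 / 3) ^ k * N ^ k)
        = N * ((1 / N) ^ (k - 1) * N ^ k) * (Real.exp 1 / 3) ^ k := by ring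
      _ = N ^ 2 * (Real.exp 1 / 3) ^ k := by rw [hNk]; ring
  -- step 4 : (e/3)^k ≤ ((e/3)^3)^(T/N)
  have he3 : (0:ℝ) < Real.exp 1 / 3 := by positivity
  have he3le1 : Real.exp 1 / 3 ≤ 1 := by
    rw [div_le_one (by norm_num)]
    linarith [Real.exp_one_lt_d9]
  have step4 : (Real.exp 1 / 3) ^ k ≤ ((Real.exp 1 / 3) ^ 3 : ℝ) ^ (T / N) := by
    have e1 : ((Real.exp 1 / 3) ^ 3 : ℝ) ^ (T / N) = (Real.exp 1 / 3) ^ (3 * (T / N)) := by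
      rw [← Real.rpow_natCast (Real.exp 1 / 3) 3, ← Real.rpow_mul he3.le]
      norm_num
    have e2 : ((Real.exp 1 / 3) : ℝ) ^ k = (Real.exp 1 / 3) ^ ((k:ℝ)) := by
      rw [Real.rpow_natCast]
    rw [e1, e2, hk]
    have : (3 * T / N + 1 : ℝ) = 3 * (T/N) + 1 := by ring
    rw [this, Real.rpow_add he3, Real.rpow_one]
    calc (Real.exp 1 / 3) ^ (3 * (T/N)) * (Real.exp 1 / 3)
        ≤ (Real.exp 1 / 3) ^ (3 * (T/N)) * 1 :=
          mul_le_mul_of_nonneg_left he3le1 (Real.rpow_nonneg he3.le _)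
      _ = (Real.exp 1 / 3) ^ (3 * (T/N)) := mul_one _
  calc μ ≤ N * (1 / N) ^ (k - 1) * T ^ k / (Nat.factorial k) := hμ
    _ ≤ N * (1 / N) ^ (k - 1) * (Real.exp 1 * T / k) ^ k := step1
    _ ≤ N * (1 / N) ^ (k - 1) * (Real.exp 1 * N / 3) ^ k := step2'
    _ = N ^ 2 * (Real.exp 1 / 3) ^ k := step3
    _ ≤ N ^ 2 * ((Real.exp 1 / 3) ^ 3 : ℝ) ^ (T / N) :=
        mul_le_mul_of_nonneg_left step4 (by positivity)

/-- if `k = 3T/N + 1` and `μ ≤ N·(1/N)^{k−1}·T^k/k!`, then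
`μ ≤ N²·((e/3)³)^{T/N}`; consequently, for any `β ∈ ((e/3)³, 1)` and any polynomial
bound `T ≤ N^m`, there are `α' > 0` and `N₀` such that for `N ≥ N₀` and
`T ≥ α'·N·(log N)²` one gets `μ ≤ β^{T/N}`. -/
theorem stmt4 (N T μ : ℝ) (hN : 0 < N) (hT : 0 < T) (k : ℕ)
    (hk : (k : ℝ) = 3 * T / N + 1) (hμ0 : 0 ≤ μ)
    (hμ : μ ≤ N * (1 / N) ^ (k - 1) * T ^ k / (Nat.factorial k)) :
    μ ≤ N ^ 2 * ((Real.exp 1 / 3) ^ 3) ^ (T / N) ∧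
      ∀ β : ℝ, (Real.exp 1 / 3) ^ 3 < β → β < 1 → ∀ m : ℕ,
        ∃ α' : ℝ, 0 < α' ∧ ∃ N₀ : ℝ, ∀ N' : ℝ, N₀ ≤ N' → ∀ T' μ' : ℝ, 0 < T' → 0 ≤ μ' →
          ∀ k' : ℕ, (k' : ℝ) = 3 * T' / N' + 1 →
            T' ≤ N' ^ m → α' * N' * (Real.log N') ^ 2 ≤ T' →
            μ' ≤ N' * (1 / N') ^ (k' - 1) * T' ^ k' / (Nat.factorial k') →
            μ' ≤ β ^ (T' / N') := by
  refine ⟨part1 N T μ hN hT k hk hμ0 hμ, ?_⟩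
  intro β hcβ hβ1 m
  set c : ℝ := (Real.exp 1 / 3) ^ 3 with hc_def
  have hc : 0 < c := by positivity
  have hβpos : 0 < β := lt_trans hc hcβ
  set L : ℝ := Real.log β - Real.log c with hL_def
  have hLpos : 0 < L := sub_pos.mpr (Real.log_lt_log hc hcβ)
  refine ⟨2 / L, by positivity, Real.exp 1, ?_⟩
  intro N' hN₀ T' μ' hT' hμ'0 k' hk' hTm hTlb hμ'
  have hN' : 0 < N' := lt_of_lt_of_le (Real.exp_pos 1) hN₀
  have hlogN' : 1 ≤ Real.log N' := by
    calc (1:ℝ) = Real.log (Real.exp 1) := (Real.log_exp 1).symm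
      _ ≤ Real.log N' := Real.log_le_log (Real.exp_pos 1) hN₀
  have h1 := part1 N' T' μ' hN' hT' k' hk' hμ'0 hμ'
  set s : ℝ := T' / N' with hs_def
  have hs : 0 < s := by positivity
  -- key : N'^2 ≤ (β/c)^s
  have hsge : 2 / L * (Real.log N') ^ 2 ≤ s := by
    rw [hs_def, le_div_iff₀ hN']
    calc 2 / L * Real.log N' ^ 2 * N' = 2 / L * N' * Real.log N' ^ 2 := by ring
      _ ≤ T' := hTlb
  have hsL : 2 * Real.log N' ≤ s * L := by
    have h2 : 2 / L * (Real.log N') ^ 2 * L ≤ s * L :=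
      mul_le_mul_of_nonneg_right hsge hLpos.le
    have h3 : 2 / L * (Real.log N') ^ 2 * L = 2 * (Real.log N') ^ 2 := by
      field_simp
    rw [h3] at h2
    nlinarith [hlogN']
  have key : N' ^ 2 ≤ (β / c) ^ s := by
    have e1 : (β / c) ^ s = Real.exp (L * s) := by
      rw [Real.rpow_def_of_pos (div_pos hβpos hc), Real.log_div hβpos.ne' hc.ne']
    have e2 : N' ^ 2 = Real.exp (2 * Real.log N') := by
      have : (2:ℝ) * Real.log N' = Real.log (N' ^ 2) := by
        rw [Real.log_pow]; push_cast; ring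
      rw [this, Real.exp_log (by positivity)]
    rw [e1, e2]
    exact Real.exp_le_exp.mpr (by linarith [hsL])
  calc μ' ≤ N' ^ 2 * c ^ s := h1
    _ ≤ (β / c) ^ s * c ^ s := mul_le_mul_of_nonneg_right key (Real.rpow_nonneg hc.le s)
    _ = (β / c * c) ^ s := (Real.mul_rpow (by positivity) hc.le).symm
    _ = β ^ s := by rw [div_mul_cancel₀ β hc.ne']
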